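/- Let d ≥ 2 and m ≥ 0 be integers, set D = Δ^d × ℝ_+^m ⊆ ℝ^{d+m}, and let p be a real polynomial in d+m variables of total degree at most n. If there is an index i ∈ {1,…,d+m} such that p(x) = 0 for every x ∈ D with x_i = 0, then there exists a real polynomial q in d+m variables of total degree at most n−1 such that p(x) = x_i q(x) for all x ∈ D. -/

import Mathlib

open MvPolynomial Finset

/-- Substituting polynomials of total degree at most 1 does not increase total degree. -/
lemma aux_totalDegree_aeval_le {N : ℕ} (s : Fin N → MvPolynomial (Fin N) ℝ)
    (hs : ∀ k, (s k).totalDegree ≤ 1) (p : MvPolynomial (Fin N) ℝ) :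
    (MvPolynomial.aeval s p).totalDegree ≤ p.totalDegree := by
  conv_lhs => rw [p.as_sum]
  rw [map_sum]
  refine (totalDegree_finset_sum _ _).trans (Finset.sup_le fun v hv => ?_)
  rw [aeval_monomial]
  refine (totalDegree_mul _ _).trans ?_
  have h1 : (algebraMap ℝ (MvPolynomial (Fin N) ℝ) (coeff v p)).totalDegree = 0 :=
    totalDegree_C _
  rw [h1, zero_add]
  calc (v.prod fun k e => s k ^ e).totalDegree
      ≤ ∑ k ∈ v.support, (s k ^ v k).totalDegree := totalDegree_finset_prod _ _
    _ ≤ ∑ k ∈ v.support, v k * 1 := by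
        refine Finset.sum_le_sum fun k _ => ?_
        exact (totalDegree_pow _ _).trans (Nat.mul_le_mul_left _ (hs k))
    _ = v.sum fun _ e => e := by simp [Finsupp.sum]
    _ ≤ p.totalDegree := le_totalDegree hv

/-- A polynomial over ℝ that vanishes on the hyperplane `x i = 0` is divisible by `X i`,
with quotient of total degree one less. -/
lemma aux_factor {N : ℕ} (P : MvPolynomial (Fin N) ℝ) (i : Fin N)
    (h : ∀ y : Fin N → ℝ, y i = 0 → MvPolynomial.eval y P = 0) :
    ∃ q : MvPolynomial (Fin N) ℝ, P = MvPolynomial.X i * q ∧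
      q.totalDegree ≤ P.totalDegree - 1 := by
  classical
  set q := MvPolynomial.divMonomial P (Finsupp.single i 1) with hq
  set r := MvPolynomial.modMonomial P (Finsupp.single i 1) with hr
  have hdecomp : MvPolynomial.X i * q + r = P := divMonomial_add_modMonomial_single P i
  -- every monomial of r has i-exponent 0
  have hrsupp : ∀ v ∈ r.support, v i = 0 := by
    intro v hv
    by_contra hne
    have hle : Finsupp.single i 1 ≤ v := by
      rw [Finsupp.single_le_iff]; omega
    have := coeff_modMonomial_of_le P hle
    rw [← hr] at this
    exact (MvPolynomial.mem_support_iff.mp hv) this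
  -- r vanishes everywhere
  have hr0 : r = 0 := by
    apply MvPolynomial.funext
    intro y
    set y' := Function.update y i 0 with hy'
    have hy'i : y' i = 0 := Function.update_self i 0 y
    have h1 : MvPolynomial.eval y r = MvPolynomial.eval y' r := by
      rw [MvPolynomial.eval_eq, MvPolynomial.eval_eq]
      refine Finset.sum_congr rfl fun v hv => ?_
      congr 1
      refine Finset.prod_congr rfl fun k hk => ?_
      have hki : k ≠ i := by
        intro hki; subst hki
        exact absurd (hrsupp v hv) (Finsupp.mem_support_iff.mp hk)
      simp [hy', Function.update_of_ne hki]
    have h2 : MvPolynomial.eval y' r = 0 := by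
      have hP' : MvPolynomial.eval y' P = 0 := h y' hy'i
      have := congrArg (MvPolynomial.eval y') hdecomp
      simp only [map_add, map_mul, MvPolynomial.eval_X, hy'i, zero_mul, zero_add] at this
      rw [this, hP']
    rw [h1, h2, map_zero]
  have hPX : P = MvPolynomial.X i * q := by rw [← hdecomp, hr0, add_zero]
  refine ⟨q, hPX, ?_⟩
  refine Finset.sup_le fun v hv => ?_
  have hcoeff : coeff v q = coeff (Finsupp.single i 1 + v) P := coeff_divMonomial _ P v
  have hmem : Finsupp.single i 1 + v ∈ P.support := by
    rw [MvPolynomial.mem_support_iff, ← hcoeff]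
    exact MvPolynomial.mem_support_iff.mp hv
  have hle : ((Finsupp.single i 1 + v).sum fun _ e => e) ≤ P.totalDegree :=
    le_totalDegree hmem
  rw [Finsupp.sum_add_index (fun _ _ => rfl) (fun _ _ _ _ => rfl),
    Finsupp.sum_single_index rfl] at hle
  omega

theorem statement1 (d m n : ℕ) (hd : 2 ≤ d)
    (D : Set (Fin (d + m) → ℝ))
    (hD : D = {x | (∀ k, 0 ≤ x k) ∧ (∀ k : Fin (d + m), (k : ℕ) < d → x k ≤ 1) ∧
        (∑ k ∈ Finset.univ.filter (fun k : Fin (d + m) => (k : ℕ) < d), x k) = 1})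
    (p : MvPolynomial (Fin (d + m)) ℝ) (hp : p.totalDegree ≤ n)
    (i : Fin (d + m))
    (hvanish : ∀ x ∈ D, x i = 0 → MvPolynomial.eval x p = 0) :
    ∃ q : MvPolynomial (Fin (d + m)) ℝ, q.totalDegree ≤ n - 1 ∧
      ∀ x ∈ D, MvPolynomial.eval x p = x i * MvPolynomial.eval x q := by
  classical
  subst hD
  -- pick j < d with j ≠ i
  obtain ⟨j, hjd, hji⟩ : ∃ j : Fin (d + m), (j : ℕ) < d ∧ j ≠ i := by
    rcases Nat.eq_zero_or_pos (i : ℕ) with h0 | h0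
    · exact ⟨⟨1, by omega⟩, by simpa using by omega, Fin.ne_of_val_ne (by simp; omega)⟩
    · exact ⟨⟨0, by omega⟩, by simpa using by omega, Fin.ne_of_val_ne (by simp; omega)⟩
  set c : MvPolynomial (Fin (d + m)) ℝ := if (i : ℕ) < d then X i else 0 with hc
  set s : Fin (d + m) → MvPolynomial (Fin (d + m)) ℝ :=
    fun k => if k = i then 0 else if k = j then X j + c else X k with hs
  have hsdeg : ∀ k, (s k).totalDegree ≤ 1 := by
    intro k
    simp only [hs]
    split_ifs with h1 h2
    · simp
    · refine (totalDegree_add _ _).trans ?_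
      simp only [hc]
      split_ifs <;> simp [totalDegree_X]
    · simp [totalDegree_X]
  set σf : (Fin (d + m) → ℝ) → (Fin (d + m) → ℝ) :=
    fun x k => MvPolynomial.eval x (s k) with hσ
  have hσx : ∀ (x : Fin (d + m) → ℝ) k, σf x k =
      if k = i then 0 else if k = j then x j + (if (i : ℕ) < d then x i else 0) else x k := by
    intro x k
    simp only [hσ, hs, hc]
    split_ifs <;> simp
  have haev : ∀ (y : Fin (d + m) → ℝ) (f : MvPolynomial (Fin (d + m)) ℝ),
      MvPolynomial.aeval y f = MvPolynomial.eval y f := by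
    intro y f
    rw [MvPolynomial.aeval_def, Algebra.algebraMap_self]
    rfl
  have hcomp : ∀ y : Fin (d + m) → ℝ,
      MvPolynomial.eval y (MvPolynomial.aeval s p) = MvPolynomial.eval (σf y) p := by
    intro y
    rw [← haev y, aeval_eq_bind₁, aeval_bind₁, haev]
    simp only [haev, hσ]
  set P := p - MvPolynomial.aeval s p with hP
  have hPvanish : ∀ y : Fin (d + m) → ℝ, y i = 0 → MvPolynomial.eval y P = 0 := by
    intro y hyi
    have hσy : σf y = y := by
      funext k
      rw [hσx]
      split_ifs with h1 h2 h3
      · rw [h1, hyi]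
      · rw [h2, hyi, add_zero]
      · rw [h2, add_zero]
      · rfl
    rw [hP, map_sub, hcomp, hσy, sub_self]
  obtain ⟨q, hPq, hqdeg⟩ := aux_factor P i hPvanish
  have hPdeg : P.totalDegree ≤ n := by
    have h1 : (MvPolynomial.aeval s p).totalDegree ≤ n :=
      (aux_totalDegree_aeval_le s hsdeg p).trans hp
    have h2 : (-(MvPolynomial.aeval s p)).totalDegree = (MvPolynomial.aeval s p).totalDegree := by
      simp [MvPolynomial.totalDegree, MvPolynomial.support_neg]
    rw [hP, sub_eq_add_neg]
    exact (totalDegree_add _ _).trans (max_le hp (h2.le.trans h1))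
  refine ⟨q, by omega, ?_⟩
  intro x hx
  obtain ⟨hx1, hx2, hx3⟩ := hx
  set F := Finset.univ.filter (fun k : Fin (d + m) => (k : ℕ) < d) with hF
  have hjF : j ∈ F := by simp [hF, hjd]
  -- σf x ∈ D
  have hmem : σf x ∈ {x : Fin (d + m) → ℝ | (∀ k, 0 ≤ x k) ∧
      (∀ k : Fin (d + m), (k : ℕ) < d → x k ≤ 1) ∧ (∑ k ∈ F, x k) = 1} := by
    refine ⟨?_, ?_, ?_⟩
    · intro k
      rw [hσx]
      split_ifs with h1 h2 h3
      · exact le_refl 0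
      · exact add_nonneg (hx1 j) (hx1 i)
      · exact add_nonneg (hx1 j) le_rfl
      · exact hx1 k
    · intro k hk
      rw [hσx]
      split_ifs with h1 h2 h3
      · norm_num
      · -- x j + x i ≤ 1
        have hiF : i ∈ F := by simp [hF, h3]
        have hsub : ({j, i} : Finset (Fin (d + m))) ⊆ F := by
          intro k hk
          simp only [Finset.mem_insert, Finset.mem_singleton] at hk
          rcases hk with rfl | rfl
          · exact hjF
          · exact hiF
        calc x j + x i = ∑ k ∈ ({j, i} : Finset (Fin (d + m))), x k :=
              (Finset.sum_pair hji).symm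
          _ ≤ ∑ k ∈ F, x k :=
              Finset.sum_le_sum_of_subset_of_nonneg hsub (fun k _ _ => hx1 k)
          _ = 1 := hx3
      · rw [add_zero]; exact hx2 j hjd
      · exact hx2 k hk
    · by_cases h3 : (i : ℕ) < d
      · have hiF : i ∈ F := by simp [hF, h3]
        have hij : i ≠ j := fun h => hji h.symm
        have hiF' : i ∈ F.erase j := Finset.mem_erase.mpr ⟨hij, hiF⟩
        have hupdate : σf x = Function.update (Function.update x i 0) j (x j + x i) := by
          funext k
          rw [hσx]
          by_cases h1 : k = i
          · subst h1
            rw [if_pos rfl, Function.update_of_ne hij, Function.update_self]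
          · by_cases h2 : k = j
            · subst h2
              rw [if_neg h1, if_pos rfl, if_pos h3, Function.update_self]
            · rw [if_neg h1, if_neg h2, Function.update_of_ne h2, Function.update_of_ne h1]
        rw [hupdate, Finset.sum_update_of_mem hjF, Finset.sdiff_singleton_eq_erase,
          Finset.sum_update_of_mem hiF', Finset.sdiff_singleton_eq_erase]
        have h4 : x j + ∑ k ∈ F.erase j, x k = 1 := by
          rw [Finset.add_sum_erase F x hjF]; exact hx3
        have h5 : x i + ∑ k ∈ (F.erase j).erase i, x k = ∑ k ∈ F.erase j, x k :=
          Finset.add_sum_erase _ x hiF'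
        linarith
      · have hcong : ∀ k ∈ F, σf x k = x k := by
          intro k hkF
          have hkd : (k : ℕ) < d := by simpa [hF] using hkF
          have hki : k ≠ i := by
            intro h; subst h; exact h3 hkd
          rw [hσx, if_neg hki, if_neg h3]
          split_ifs with h2
          · rw [h2, add_zero]
          · rfl
        rw [Finset.sum_congr rfl hcong]
        exact hx3
  have hσxi : σf x i = 0 := by rw [hσx, if_pos rfl]
  have hpσ : MvPolynomial.eval (σf x) p = 0 := hvanish _ hmem hσxi
  have := congrArg (MvPolynomial.eval x) hPq
  rw [hP, map_sub, hcomp, hpσ, sub_zero, map_mul, MvPolynomial.eval_X] at this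
  exact this
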